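/- arXiv:2203.04184 — 3 statements merged into one kernel-verified Lean document; each statement's English description precedes it below -/
import Mathlib

section
/- Let φ = (√5 - 1)/2. Then Li_2(φ) = π^2/10 - (ln φ)^2, where Li_2(x) = ∑_{n=1}^∞ x^n/n^2. -/
open Real Finset

noncomputable def H (n : ℕ) : ℝ := ∑ k ∈ Finset.range n, 1 / ((k : ℝ) + 1)

noncomputable def H2 (n : ℕ) : ℝ := ∑ k ∈ Finset.range n, 1 / ((k : ℝ) + 1) ^ 2

noncomputable def zeta11 (n : ℕ) : ℝ :=
  ∑ k ∈ Finset.range n, ∑ j ∈ Finset.range k, 1 / (((k : ℝ) + 1) * ((j : ℝ) + 1))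

noncomputable def Li (m : ℕ) (x : ℝ) : ℝ := ∑' n : ℕ, x ^ (n + 1) / ((n : ℝ) + 1) ^ m

noncomputable def Li21 (x : ℝ) : ℝ := ∑' n : ℕ, x ^ (n + 1) * H n / ((n : ℝ) + 1) ^ 2

noncomputable def Li31 (x : ℝ) : ℝ := ∑' n : ℕ, x ^ (n + 1) * H n / ((n : ℝ) + 1) ^ 3

noncomputable def zeta3 : ℝ := ∑' n : ℕ, 1 / ((n : ℝ) + 1) ^ 3

noncomputable def zeta31 : ℝ := ∑' n : ℕ, H n / ((n : ℝ) + 1) ^ 3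


lemma summable_aux : Summable (fun n : ℕ => 1 / ((n : ℝ) + 1) ^ 2) := by
  have h := (Real.summable_one_div_nat_pow (p := 2)).2 one_lt_two
  have h2 := (summable_nat_add_iff (f := fun n : ℕ => 1 / (n : ℝ) ^ 2) 1).2 h
  exact h2.congr fun n => by push_cast; ring

lemma summable_li2 {x : ℝ} (hx : |x| ≤ 1) :
    Summable (fun n : ℕ => x ^ (n + 1) / ((n : ℝ) + 1) ^ 2) := by
  refine Summable.of_norm_bounded summable_aux fun n => ?_
  rw [norm_div, Real.norm_eq_abs, Real.norm_eq_abs]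
  simp only [abs_pow]
  rw [abs_of_pos (show (0:ℝ) < (n:ℝ)+1 by positivity)]
  gcongr
  · exact pow_le_one₀ (abs_nonneg x) hx

lemma hasSum_li2 {x : ℝ} (hx : |x| ≤ 1) :
    HasSum (fun n : ℕ => x ^ (n + 1) / ((n : ℝ) + 1) ^ 2) (Li 2 x) :=
  (summable_li2 hx).hasSum

lemma li2_continuousOn : ContinuousOn (Li 2) (Set.Icc (-1 : ℝ) 1) := by
  rw [continuousOn_iff_continuous_restrict]
  have he : (Set.Icc (-1:ℝ) 1).domRestrict (Li 2)
      = fun x : Set.Icc (-1:ℝ) 1 => ∑' n : ℕ, (x : ℝ) ^ (n + 1) / ((n : ℝ) + 1) ^ 2 := rfl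
  rw [he]
  refine continuous_tsum (fun n => ?_) summable_aux (fun n x => ?_)
  · exact (continuous_subtype_val.pow _).div_const _
  · have hx : |(x : ℝ)| ≤ 1 := abs_le.2 ⟨x.2.1, x.2.2⟩
    rw [norm_div, Real.norm_eq_abs, Real.norm_eq_abs]
    simp only [abs_pow]
    rw [abs_of_pos (show (0:ℝ) < (n:ℝ)+1 by positivity)]
    gcongr
    · exact pow_le_one₀ (abs_nonneg _) hx

noncomputable def dli (x : ℝ) : ℝ := ∑' n : ℕ, x ^ n / ((n : ℝ) + 1)

lemma hasDerivAt_li2 {x : ℝ} (hx : |x| < 1) : HasDerivAt (Li 2) (dli x) x := by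
  set r : ℝ := (1 + |x|) / 2 with hr
  have hr0 : 0 ≤ r := by positivity
  have hr1 : r < 1 := by rw [hr]; linarith
  have hxr : |x| < r := by rw [hr]; linarith
  have key := hasDerivAt_tsum_of_isPreconnected
    (u := fun n : ℕ => r ^ n)
    (g := fun (n : ℕ) (y : ℝ) => y ^ (n + 1) / ((n : ℝ) + 1) ^ 2)
    (g' := fun (n : ℕ) (y : ℝ) => y ^ n / ((n : ℝ) + 1))
    (t := Metric.ball (0 : ℝ) r) (y₀ := x) (y := x)
    (summable_geometric_of_lt_one hr0 hr1) Metric.isOpen_ball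
    (convex_ball (0:ℝ) r).isPreconnected
    ?_ ?_ ?_ (summable_li2 hx.le) ?_
  · exact key
  · intro n y _
    have h := (hasDerivAt_pow (n + 1) y).div_const (((n : ℝ) + 1) ^ 2)
    refine h.congr_deriv ?_
    have hne : ((n : ℝ) + 1) ≠ 0 := by positivity
    push_cast [Nat.add_sub_cancel]
    field_simp
  · intro n y hy
    have hyr : |y| ≤ r := by
      have := Metric.mem_ball.1 hy
      rw [Real.dist_eq, sub_zero] at this
      exact this.le
    rw [norm_div, Real.norm_eq_abs, Real.norm_eq_abs]
    simp only [abs_pow]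
    rw [abs_of_pos (show (0:ℝ) < (n:ℝ)+1 by positivity)]
    calc |y| ^ n / ((n:ℝ)+1) ≤ |y| ^ n :=
          div_le_self (pow_nonneg (abs_nonneg _) _)
            (by linarith [Nat.cast_nonneg (α := ℝ) n])
      _ ≤ r ^ n := pow_le_pow_left₀ (abs_nonneg _) hyr n
  · rw [Metric.mem_ball, Real.dist_eq, sub_zero]; exact hxr
  · rw [Metric.mem_ball, Real.dist_eq, sub_zero]; exact hxr

lemma dli_eq {x : ℝ} (hx : |x| < 1) (hx0 : x ≠ 0) : dli x = -Real.log (1 - x) / x := by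
  have h := Real.hasSum_pow_div_log_of_abs_lt_one hx
  have h2 : HasSum (fun n : ℕ => x * (x ^ n / ((n : ℝ) + 1))) (-Real.log (1 - x)) := by
    refine h.congr_fun fun n => ?_
    rw [pow_succ]
    ring
  have h3 : -Real.log (1 - x) = x * (-Real.log (1 - x) / x) := by field_simp
  rw [h3] at h2
  exact ((hasSum_mul_left_iff hx0).1 h2).tsum_eq

lemma hasDerivAt_li2' {x : ℝ} (hx : |x| < 1) (hx0 : x ≠ 0) :
    HasDerivAt (Li 2) (-Real.log (1 - x) / x) x := by
  have := hasDerivAt_li2 hx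
  rwa [dli_eq hx hx0] at this

lemma li2_zero : Li 2 0 = 0 := by
  simp [Li]

lemma li2_one : Li 2 1 = π ^ 2 / 6 := by
  have h := (hasSum_nat_add_iff' (f := fun n : ℕ => 1 / (n : ℝ) ^ 2) 1).2 hasSum_zeta_two
  simp only [Finset.range_one, Finset.sum_singleton, Nat.cast_zero] at h
  norm_num at h
  have h2 : HasSum (fun n : ℕ => (1:ℝ) ^ (n + 1) / ((n : ℝ) + 1) ^ 2) (π ^ 2 / 6) := by
    refine h.congr_fun fun n => ?_
    push_cast
    norm_num
  exact h2.tsum_eq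

lemma li2_dup {x : ℝ} (hx : |x| ≤ 1) : Li 2 (x ^ 2) = 2 * Li 2 x + 2 * Li 2 (-x) := by
  have hx2 : |x ^ 2| ≤ 1 := by
    rw [abs_pow]; exact pow_le_one₀ (abs_nonneg x) hx
  have hxn : |(-x)| ≤ 1 := by rwa [abs_neg]
  set f : ℕ → ℝ := fun n => 2 * (x ^ (n + 1) / ((n : ℝ) + 1) ^ 2)
      + 2 * ((-x) ^ (n + 1) / ((n : ℝ) + 1) ^ 2) with hf
  have h2 : HasSum f (2 * Li 2 x + 2 * Li 2 (-x)) :=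
    ((hasSum_li2 hx).mul_left 2).add ((hasSum_li2 hxn).mul_left 2)
  have hi : Function.Injective (fun m : ℕ => 2 * m + 1) := fun a b hab => by
    simpa using hab
  have hvanish : ∀ n ∉ Set.range (fun m : ℕ => 2 * m + 1), f n = 0 := by
    intro n hn
    have he : Even n := by
      rcases Nat.even_or_odd n with h | h
      · exact h
      · obtain ⟨k, hk⟩ := h
        exact absurd ⟨k, hk.symm⟩ hn
    have ho : Odd (n + 1) := Even.add_one he
    simp only [hf]
    rw [Odd.neg_pow ho]
    ring
  have h1 : HasSum (f ∘ fun m : ℕ => 2 * m + 1) (Li 2 (x ^ 2)) := by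
    refine (hasSum_li2 hx2).congr_fun fun m => ?_
    simp only [hf, Function.comp]
    have e1 : 2 * m + 1 + 1 = 2 * (m + 1) := by ring
    rw [e1, Even.neg_pow (even_two_mul (m + 1)), pow_mul]
    push_cast
    have hne : ((m : ℝ) + 1) ≠ 0 := by positivity
    have hne2 : (2 * (m : ℝ) + 1 + 1) ≠ 0 := by positivity
    field_simp
    ring
  exact ((hi.hasSum_iff hvanish).1 h1).unique h2

lemma log_prod_limit :
    Filter.Tendsto (fun z : ℝ => Real.log z * Real.log (1 - z)) (nhdsWithin 1 (Set.Iio 1))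
      (nhds 0) := by
  have hev : ∀ᶠ z in nhdsWithin 1 (Set.Iio (1:ℝ)),
      ‖Real.log z * Real.log (1 - z)‖ ≤ 4 * Real.sqrt (1 - z) := by
    filter_upwards [Ioo_mem_nhdsLT_of_mem
      (show (1:ℝ) ∈ Set.Ioc (1/2 : ℝ) 1 by constructor <;> norm_num)] with z hz
    obtain ⟨hz1, hz2⟩ := hz
    have h1z : 0 < 1 - z := by linarith
    have hz0 : (0:ℝ) < z := by linarith
    have hlz : Real.log z ≤ 0 := Real.log_nonpos (by linarith) (by linarith)
    have hl1z : Real.log (1 - z) ≤ 0 := Real.log_nonpos (by linarith) (by linarith)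
    have b1 : -Real.log z ≤ 2 * (1 - z) := by
      have h := Real.log_le_sub_one_of_pos (show (0:ℝ) < z⁻¹ by positivity)
      rw [Real.log_inv] at h
      have key : z⁻¹ - 1 = (1 - z) / z := by field_simp
      rw [key] at h
      have h2 : (1 - z) / z ≤ 2 * (1 - z) := by
        rw [div_le_iff₀ hz0]
        nlinarith
      linarith
    have hs : 0 < Real.sqrt (1 - z) := Real.sqrt_pos.2 h1z
    have b2 : -Real.log (1 - z) ≤ 2 / Real.sqrt (1 - z) := by
      have h := Real.log_le_sub_one_of_pos (show (0:ℝ) < (Real.sqrt (1 - z))⁻¹ by positivity)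
      rw [Real.log_inv, Real.log_sqrt h1z.le] at h
      have h2 : 2 * (Real.sqrt (1 - z))⁻¹ = 2 / Real.sqrt (1 - z) := by
        rw [div_eq_mul_inv]
      linarith
    have hprod : Real.log z * Real.log (1 - z) ≤ (2 * (1 - z)) * (2 / Real.sqrt (1 - z)) := by
      have h := mul_le_mul b1 b2 (by linarith) (by linarith)
      nlinarith [h]
    have heq : (2 * (1 - z)) * (2 / Real.sqrt (1 - z)) = 4 * Real.sqrt (1 - z) := by
      have h := Real.div_sqrt (x := 1 - z)
      calc (2 * (1 - z)) * (2 / Real.sqrt (1 - z)) = 4 * ((1 - z) / Real.sqrt (1 - z)) := by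
            ring
        _ = 4 * Real.sqrt (1 - z) := by rw [h]
    rw [Real.norm_eq_abs, abs_of_nonneg (mul_nonneg_of_nonpos_of_nonpos hlz hl1z)]
    linarith
  have hg0 : Filter.Tendsto (fun z : ℝ => 4 * Real.sqrt (1 - z))
      (nhdsWithin 1 (Set.Iio 1)) (nhds 0) := by
    have hc : Continuous fun z : ℝ => 4 * Real.sqrt (1 - z) :=
      continuous_const.mul (Real.continuous_sqrt.comp (continuous_const.sub continuous_id))
    have h := hc.tendsto 1
    simp only [Function.comp, sub_self, Real.sqrt_zero, mul_zero] at h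
    exact h.mono_left nhdsWithin_le_nhds
  exact squeeze_zero_norm' hev hg0

lemma li2_reflection {x : ℝ} (hx : x ∈ Set.Ioo (0:ℝ) 1) :
    Li 2 x + Li 2 (1 - x) + Real.log x * Real.log (1 - x) = π ^ 2 / 6 := by
  set R : ℝ → ℝ := fun y => Li 2 y + Li 2 (1 - y) + Real.log y * Real.log (1 - y) with hR
  have hderiv : ∀ y ∈ Set.Ioo (0:ℝ) 1, HasDerivAt R 0 y := by
    intro y hy
    obtain ⟨hy0, hy1⟩ := hy
    have hy0' : y ≠ 0 := ne_of_gt hy0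
    have h1y : (0:ℝ) < 1 - y := by linarith
    have h1y0 : (1:ℝ) - y ≠ 0 := ne_of_gt h1y
    have habs : |y| < 1 := abs_lt.2 ⟨by linarith, hy1⟩
    have habs2 : |1 - y| < 1 := abs_lt.2 ⟨by linarith, by linarith⟩
    have hlin : HasDerivAt (fun z : ℝ => 1 - z) (-1) y := by
      simpa using (hasDerivAt_id y).const_sub 1
    have d1 := hasDerivAt_li2' habs hy0'
    have d2 : HasDerivAt (fun z : ℝ => Li 2 (1 - z))
        ((-Real.log (1 - (1 - y)) / (1 - y)) * (-1)) y :=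
      (hasDerivAt_li2' habs2 h1y0).comp y hlin
    have d3 : HasDerivAt (fun z : ℝ => Real.log z * Real.log (1 - z))
        (y⁻¹ * Real.log (1 - y) + Real.log y * ((1 - y)⁻¹ * (-1))) y := by
      have dl1 : HasDerivAt Real.log y⁻¹ y := Real.hasDerivAt_log hy0'
      have dl2 : HasDerivAt (fun z : ℝ => Real.log (1 - z)) ((1 - y)⁻¹ * (-1)) y :=
        (Real.hasDerivAt_log h1y0).comp y hlin
      exact dl1.mul dl2
    have dsum := (d1.add d2).add d3
    have hval : -Real.log (1 - y) / y + (-Real.log (1 - (1 - y)) / (1 - y)) * (-1)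
        + (y⁻¹ * Real.log (1 - y) + Real.log y * ((1 - y)⁻¹ * (-1))) = 0 := by
      have e : 1 - (1 - y) = y := by ring
      rw [e]
      field_simp
      ring
    rw [hval] at dsum
    exact dsum
  have hconst : ∀ z ∈ Set.Ico x 1, R z = R x := by
    intro z hz
    have h := constant_of_has_deriv_right_zero (f := R) (a := x) (b := z)
      (fun w hw => by
        have hw1 : w ∈ Set.Ioo (0:ℝ) 1 :=
          ⟨lt_of_lt_of_le hx.1 hw.1, lt_of_le_of_lt hw.2 hz.2⟩
        exact (hderiv w hw1).continuousAt.continuousWithinAt)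
      (fun w hw => by
        have hw1 : w ∈ Set.Ioo (0:ℝ) 1 := ⟨lt_of_lt_of_le hx.1 hw.1, lt_of_lt_of_le hw.2 hz.2.le⟩
        exact (hderiv w hw1).hasDerivWithinAt)
    exact h z (Set.right_mem_Icc.2 hz.1)
  have hlim1 : Filter.Tendsto R (nhdsWithin 1 (Set.Iio 1)) (nhds (R x)) := by
    refine Filter.Tendsto.congr' ?_ tendsto_const_nhds
    filter_upwards [Ioo_mem_nhdsLT_of_mem
      (show (1:ℝ) ∈ Set.Ioc x 1 from ⟨hx.2, le_refl 1⟩)] with z hz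
    exact (hconst z ⟨hz.1.le, hz.2⟩).symm
  have hlim2 : Filter.Tendsto R (nhdsWithin 1 (Set.Iio 1)) (nhds (π ^ 2 / 6)) := by
    have t1 : Filter.Tendsto (Li 2) (nhdsWithin 1 (Set.Iio 1)) (nhds (Li 2 1)) := by
      rw [← nhdsWithin_Ioo_eq_nhdsLT (show (-1:ℝ) < 1 by norm_num)]
      exact tendsto_nhdsWithin_mono_left Set.Ioo_subset_Icc_self
        (li2_continuousOn 1 (by norm_num))
    have t2 : Filter.Tendsto (fun z : ℝ => Li 2 (1 - z)) (nhdsWithin 1 (Set.Iio 1))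
        (nhds (Li 2 0)) := by
      have c0 : ContinuousAt (Li 2) 0 :=
        (hasDerivAt_li2 (by norm_num : |(0:ℝ)| < 1)).continuousAt
      have hin : Filter.Tendsto (fun z : ℝ => 1 - z) (nhdsWithin 1 (Set.Iio 1)) (nhds 0) := by
        have hc : Continuous (fun z : ℝ => 1 - z) := continuous_const.sub continuous_id
        have h := (hc.tendsto (1:ℝ)).mono_left (nhdsWithin_le_nhds (s := Set.Iio (1:ℝ)))
        simpa using h
      exact c0.tendsto.comp hin
    have t3 := log_prod_limit
    have := (t1.add t2).add t3
    rw [li2_one, li2_zero] at this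
    simpa using this
  exact tendsto_nhds_unique hlim1 hlim2

lemma li2_landen {c : ℝ} (hc : c ∈ Set.Ioo (0:ℝ) (1/2)) :
    Li 2 c + Li 2 (-c / (1 - c)) + Real.log (1 - c) ^ 2 / 2 = 0 := by
  set L : ℝ → ℝ := fun x => Li 2 x + Li 2 (-x / (1 - x)) + Real.log (1 - x) ^ 2 / 2 with hL
  have hcont : ∀ x ∈ Set.Icc (0:ℝ) c, ContinuousAt L x := by
    intro x hx
    have hx0 := hx.1
    have hx1 : x < 1/2 := lt_of_le_of_lt hx.2 hc.2
    have h1x : (0:ℝ) < 1 - x := by linarith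
    have hxa : |x| < 1 := by rw [abs_of_nonneg hx0]; linarith
    have hy : |(-x / (1 - x))| < 1 := by
      rw [abs_div, abs_neg, abs_of_nonneg hx0, abs_of_pos h1x, div_lt_one h1x]
      linarith
    have hinner : ContinuousAt (fun z : ℝ => -z / (1 - z)) x :=
      (continuousAt_id.neg).div ((continuousAt_const).sub continuousAt_id) (ne_of_gt h1x)
    have c1 : ContinuousAt (Li 2) x := (hasDerivAt_li2 hxa).continuousAt
    have c2 : ContinuousAt (fun z : ℝ => Li 2 (-z / (1 - z))) x :=
      ContinuousAt.comp (g := Li 2) (f := fun z : ℝ => -z / (1 - z))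
        (hasDerivAt_li2 hy).continuousAt hinner
    have c3 : ContinuousAt (fun z : ℝ => Real.log (1 - z) ^ 2 / 2) x := by
      have : ContinuousAt (fun z : ℝ => Real.log (1 - z)) x :=
        ContinuousAt.comp (Real.continuousAt_log (ne_of_gt h1x))
          ((continuousAt_const).sub continuousAt_id)
      exact (this.pow 2).div_const 2
    exact (c1.add c2).add c3
  have hderiv : ∀ x ∈ Set.Ioo (0:ℝ) c, HasDerivAt L 0 x := by
    intro x hx
    obtain ⟨hx0, hxc⟩ := hx
    have hx1 : x < 1/2 := lt_trans hxc hc.2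
    have h1x : (0:ℝ) < 1 - x := by linarith
    have h1x0 : (1:ℝ) - x ≠ 0 := ne_of_gt h1x
    have hx0' : x ≠ 0 := ne_of_gt hx0
    have hxa : |x| < 1 := by rw [abs_of_pos hx0]; linarith
    have hya : |(-x / (1 - x))| < 1 := by
      rw [abs_div, abs_neg, abs_of_pos hx0, abs_of_pos h1x, div_lt_one h1x]
      linarith
    have hy0 : -x / (1 - x) ≠ 0 := by
      apply div_ne_zero _ h1x0
      simpa using hx0'
    have hlin : HasDerivAt (fun z : ℝ => 1 - z) (-1) x := by
      simpa using (hasDerivAt_id x).const_sub 1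
    have hinner : HasDerivAt (fun z : ℝ => -z / (1 - z)) (-1 / (1 - x) ^ 2) x := by
      have h := ((hasDerivAt_id x).neg).div hlin h1x0
      refine h.congr_deriv ?_
      field_simp
      simp only [Pi.neg_apply, id]
      ring
    have d1 := hasDerivAt_li2' hxa hx0'
    have d2 : HasDerivAt (fun z : ℝ => Li 2 (-z / (1 - z)))
        ((-Real.log (1 - (-x / (1 - x))) / (-x / (1 - x))) * (-1 / (1 - x) ^ 2)) x :=
      by
        have h2 := hasDerivAt_li2' hya hy0
        exact h2.comp x hinner
    have d3 : HasDerivAt (fun z : ℝ => Real.log (1 - z) ^ 2 / 2)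
        ((2 * Real.log (1 - x) ^ 1 * ((1 - x)⁻¹ * (-1))) / 2) x := by
      have hlog : HasDerivAt (fun z : ℝ => Real.log (1 - z)) ((1 - x)⁻¹ * (-1)) x :=
        (Real.hasDerivAt_log h1x0).comp x hlin
      have := (hlog.pow 2).div_const 2
      refine this.congr_deriv ?_
      try norm_num
    have dsum := (d1.add d2).add d3
    have hy1 : 1 - (-x / (1 - x)) = (1 - x)⁻¹ := by
      field_simp
      ring
    have hval : -Real.log (1 - x) / x
        + (-Real.log (1 - (-x / (1 - x))) / (-x / (1 - x))) * (-1 / (1 - x) ^ 2)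
        + (2 * Real.log (1 - x) ^ 1 * ((1 - x)⁻¹ * (-1))) / 2 = 0 := by
      rw [hy1, Real.log_inv]
      field_simp
      ring
    rw [hval] at dsum
    exact dsum
  have hconst : ∀ a ∈ Set.Ioo (0:ℝ) c, L c = L a := by
    intro a ha
    have h := constant_of_has_deriv_right_zero (f := L) (a := a) (b := c)
      (fun w hw => (hcont w ⟨le_trans ha.1.le hw.1, hw.2⟩).continuousWithinAt)
      (fun w hw => (hderiv w ⟨lt_of_lt_of_le ha.1 hw.1, hw.2⟩).hasDerivWithinAt)
    exact (h c (Set.right_mem_Icc.2 ha.2.le)).symm ▸ rfl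
  have hlim1 : Filter.Tendsto L (nhdsWithin 0 (Set.Ioi 0)) (nhds (L 0)) :=
    (hcont 0 ⟨le_refl 0, hc.1.le⟩).continuousWithinAt
  have hlim2 : Filter.Tendsto L (nhdsWithin 0 (Set.Ioi 0)) (nhds (L c)) := by
    refine Filter.Tendsto.congr' ?_ tendsto_const_nhds
    filter_upwards [Ioo_mem_nhdsGT_of_mem
      (show (0:ℝ) ∈ Set.Ico (0:ℝ) c from ⟨le_refl 0, hc.1⟩)] with a ha
    exact hconst a ha
  have h0c : L 0 = L c := tendsto_nhds_unique hlim1 hlim2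
  have hL0 : L 0 = 0 := by
    simp only [hL, li2_zero, neg_zero, zero_div, sub_zero, Real.log_one]
    norm_num
  have : L c = 0 := by rw [← h0c, hL0]
  simpa [hL] using this

theorem stmt7 :
    Li 2 (((Real.sqrt 5 - 1) / 2)) = π ^ 2 / 10 - Real.log (((Real.sqrt 5 - 1) / 2)) ^ 2 := by
  have h5 : Real.sqrt 5 ^ 2 = 5 := Real.sq_sqrt (by norm_num)
  have hs0 : 0 ≤ Real.sqrt 5 := Real.sqrt_nonneg 5
  have h2lt : 2 < Real.sqrt 5 := by nlinarith
  have hlt3 : Real.sqrt 5 < 3 := by nlinarith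
  set φ : ℝ := (Real.sqrt 5 - 1) / 2 with hφ
  have hφ0 : 0 < φ := by rw [hφ]; linarith
  have hφ1 : φ < 1 := by rw [hφ]; linarith
  have hφh : 1/2 < φ := by rw [hφ]; linarith
  have hsq : φ ^ 2 = 1 - φ := by rw [hφ]; linear_combination h5 / 4
  have hrefl := li2_reflection (x := φ) ⟨hφ0, hφ1⟩
  have hsq' : 1 - φ = φ ^ 2 := hsq.symm
  rw [hsq'] at hrefl
  have hlog2 : Real.log (φ ^ 2) = 2 * Real.log φ := by
    rw [Real.log_pow]; norm_num
  rw [hlog2] at hrefl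
  rw [show Real.log φ * (2 * Real.log φ) = 2 * Real.log φ ^ 2 from by ring] at hrefl
  have hland := li2_landen (c := φ ^ 2) ⟨by positivity, by rw [hsq]; linarith⟩
  have h1msq : 1 - φ ^ 2 = φ := by rw [hsq]; ring
  rw [h1msq] at hland
  have hyval : -φ ^ 2 / φ = -φ := by
    field_simp
  rw [hyval] at hland
  have hdup := li2_dup (x := φ) (by rw [abs_of_pos hφ0]; linarith)
  linarith [hrefl, hland, hdup]
end

section
/- For 0 < x < 1, Li_{2,1}(x) = ζ(3) - Li_3(1-x) + ln(1-x)*Li_2(1-x) + (1/2)*ln(x)*ln^2(1-x). -/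
open Real Finset

/-! ### Auxiliary lemmas -/

open Filter Topology

lemma H_nonneg (n : ℕ) : 0 ≤ H n :=
  Finset.sum_nonneg fun k _ => by positivity

lemma H_le (n : ℕ) : H n ≤ n := by
  calc H n ≤ ∑ k ∈ Finset.range n, 1 := by
        apply Finset.sum_le_sum
        intro k _
        rw [div_le_one (by positivity)]
        linarith [Nat.cast_nonneg (α := ℝ) k]
    _ = n := by simp

lemma summable_np1 {r : ℝ} (hr : |r| < 1) :
    Summable fun n : ℕ => ((n : ℝ) + 1) * r ^ n := by
  have h1 : Summable fun n : ℕ => (n : ℝ) ^ 1 * r ^ n :=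
    summable_pow_mul_geometric_of_norm_lt_one 1 (by rwa [Real.norm_eq_abs])
  have h2 : Summable fun n : ℕ => r ^ n :=
    (hasSum_geometric_of_norm_lt_one (by rwa [Real.norm_eq_abs])).summable
  exact (h1.add h2).congr fun n => by ring

lemma antidiag_sum (n : ℕ) :
    ∑ kl ∈ Finset.HasAntidiagonal.antidiagonal n, (1:ℝ) / (((kl.1 : ℝ) + 1) * ((kl.2 : ℝ) + 1))
      = 2 * H (n + 1) / ((n : ℝ) + 2) := by
  have h1 : ∑ kl ∈ Finset.HasAntidiagonal.antidiagonal n, (1:ℝ) / ((kl.1 : ℝ) + 1) = H (n + 1) := by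
    rw [Finset.Nat.sum_antidiagonal_eq_sum_range_succ_mk]
    rfl
  have h2 : ∑ kl ∈ Finset.HasAntidiagonal.antidiagonal n, (1:ℝ) / ((kl.2 : ℝ) + 1) = H (n + 1) := by
    rw [← Finset.HasAntidiagonal.map_swap_antidiagonal (n := n), Finset.sum_map]
    simpa using h1
  have key : ∀ kl ∈ Finset.HasAntidiagonal.antidiagonal n,
      (1:ℝ) / (((kl.1 : ℝ) + 1) * ((kl.2 : ℝ) + 1))
        = (1 / ((n : ℝ) + 2)) * (1 / ((kl.1 : ℝ) + 1) + 1 / ((kl.2 : ℝ) + 1)) := by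
    intro kl hkl
    rw [Finset.HasAntidiagonal.mem_antidiagonal] at hkl
    have hsum : ((kl.1 : ℝ) + 1) + ((kl.2 : ℝ) + 1) = (n : ℝ) + 2 := by
      have := congrArg (Nat.cast : ℕ → ℝ) hkl
      push_cast at this
      linarith
    have ha : (0:ℝ) < (kl.1 : ℝ) + 1 := by positivity
    have hb : (0:ℝ) < (kl.2 : ℝ) + 1 := by positivity
    have hn2 : ((n : ℝ) + 2) ≠ 0 := by positivity
    field_simp
    nlinarith [hsum]
  rw [Finset.sum_congr rfl key, ← Finset.mul_sum, Finset.sum_add_distrib, h1, h2]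
  ring

lemma summable_norm_log_series {x : ℝ} (hx : |x| < 1) :
    Summable fun n : ℕ => ‖x ^ (n + 1) / ((n : ℝ) + 1)‖ := by
  apply Summable.of_nonneg_of_le (fun n => norm_nonneg _) (fun n => ?_)
    ((hasSum_geometric_of_norm_lt_one (ξ := |x|)
      (by rw [Real.norm_eq_abs, abs_abs]; exact hx)).summable)
  rw [Real.norm_eq_abs, abs_div, abs_pow]
  have h1 : (1:ℝ) ≤ |(n : ℝ) + 1| := by
    rw [abs_of_nonneg (by positivity)]; linarith [Nat.cast_nonneg (α := ℝ) n]
  calc |x| ^ (n+1) / |(n : ℝ) + 1| ≤ |x| ^ (n+1) / 1 := by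
        apply div_le_div_of_nonneg_left (by positivity) one_pos h1
    _ = |x| ^ n * |x| := by rw [div_one, pow_succ]
    _ ≤ |x| ^ n * 1 := by
        apply mul_le_mul_of_nonneg_left (le_of_lt hx) (by positivity)
    _ = |x| ^ n := mul_one _

lemma summable_norm_Li (m : ℕ) {x : ℝ} (hx : |x| < 1) :
    Summable fun n : ℕ => ‖x ^ (n + 1) / ((n : ℝ) + 1) ^ m‖ := by
  apply Summable.of_nonneg_of_le (fun n => norm_nonneg _) (fun n => ?_)
    ((hasSum_geometric_of_norm_lt_one (ξ := |x|)
      (by rw [Real.norm_eq_abs, abs_abs]; exact hx)).summable)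
  rw [Real.norm_eq_abs, abs_div, abs_pow]
  have h1 : (1:ℝ) ≤ |((n : ℝ) + 1) ^ m| := by
    rw [abs_of_nonneg (by positivity)]
    exact one_le_pow₀ (by linarith [Nat.cast_nonneg (α := ℝ) n])
  calc |x| ^ (n+1) / |((n : ℝ) + 1) ^ m| ≤ |x| ^ (n+1) / 1 := by
        apply div_le_div_of_nonneg_left (by positivity) one_pos h1
    _ = |x| ^ n * |x| := by rw [div_one, pow_succ]
    _ ≤ |x| ^ n * 1 := by
        apply mul_le_mul_of_nonneg_left (le_of_lt hx) (by positivity)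
    _ = |x| ^ n := mul_one _

/-- The Cauchy-product identity `∑ x^(n+1) H n / (n+1) = log(1-x)^2 / 2`. -/
lemma hasSum_A {x : ℝ} (hx : |x| < 1) :
    HasSum (fun n : ℕ => x ^ (n + 1) * H n / ((n : ℝ) + 1)) (Real.log (1 - x) ^ 2 / 2) := by
  set f : ℕ → ℝ := fun n => x ^ (n + 1) / ((n : ℝ) + 1) with hf_def
  have hf : HasSum f (-Real.log (1 - x)) := Real.hasSum_pow_div_log_of_abs_lt_one hx
  have hnorm : Summable fun n => ‖f n‖ := summable_norm_log_series hx
  have hinner : ∀ n : ℕ, ∑ kl ∈ Finset.HasAntidiagonal.antidiagonal n, f kl.1 * f kl.2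
      = 2 * (x ^ (n + 2) * H (n + 1) / ((n : ℝ) + 2)) := by
    intro n
    have h : ∀ kl ∈ Finset.HasAntidiagonal.antidiagonal n, f kl.1 * f kl.2
        = x ^ (n + 2) * ((1:ℝ) / (((kl.1 : ℝ) + 1) * ((kl.2 : ℝ) + 1))) := by
      intro kl hkl
      rw [Finset.HasAntidiagonal.mem_antidiagonal] at hkl
      simp only [hf_def]
      rw [div_mul_div_comm, ← pow_add]
      have h2 : kl.1 + 1 + (kl.2 + 1) = n + 2 := by omega
      rw [h2]
      ring
    rw [Finset.sum_congr rfl h, ← Finset.mul_sum, antidiag_sum]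
    ring
  have hprod : Real.log (1 - x) ^ 2
      = ∑' n : ℕ, ∑ kl ∈ Finset.HasAntidiagonal.antidiagonal n, f kl.1 * f kl.2 := by
    have h := tsum_mul_tsum_eq_tsum_sum_antidiagonal_of_summable_norm hnorm hnorm
    rw [hf.tsum_eq] at h
    rw [← h]; ring
  have hsum2 : Summable fun n : ℕ => ∑ kl ∈ Finset.HasAntidiagonal.antidiagonal n, f kl.1 * f kl.2 :=
    (summable_norm_sum_mul_antidiagonal_of_summable_norm hnorm hnorm).of_norm
  have h3 : HasSum (fun n : ℕ => ∑ kl ∈ Finset.HasAntidiagonal.antidiagonal n, f kl.1 * f kl.2)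
      (Real.log (1 - x) ^ 2) := hprod ▸ hsum2.hasSum
  set g : ℕ → ℝ := fun n => x ^ (n + 1) * H n / ((n : ℝ) + 1) with hg_def
  have h5 := h3.div_const 2
  have hfun : (fun n : ℕ => (∑ kl ∈ Finset.HasAntidiagonal.antidiagonal n, f kl.1 * f kl.2) / 2)
      = fun n => g (n + 1) := by
    funext n
    rw [hinner]
    simp only [hg_def]
    push_cast
    ring
  rw [hfun] at h5
  have h6 := (hasSum_nat_add_iff (f := g) 1).mp h5
  have hg0 : g 0 = 0 := by simp [hg_def, H]
  simpa [hg0] using h6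

/-- Generic term-by-term differentiation for series `∑ y^(n+1) c n` with `|c n| ≤ 1`. -/
lemma hasDerivAt_series (c : ℕ → ℝ) (hc : ∀ n, |c n| ≤ 1) {x : ℝ} (hx : |x| < 1) :
    HasDerivAt (fun y => ∑' n : ℕ, y ^ (n + 1) * c n)
      (∑' n : ℕ, ((n : ℝ) + 1) * x ^ n * c n) x := by
  set r : ℝ := (1 + |x|) / 2 with hr_def
  have hr0 : 0 ≤ r := by positivity
  have hr1 : r < 1 := by rw [hr_def]; linarith
  have hxr : |x| < r := by rw [hr_def]; linarith [abs_nonneg x]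
  have hrabs : |r| < 1 := by rwa [abs_of_nonneg hr0]
  have hu : Summable fun n : ℕ => ((n : ℝ) + 1) * r ^ n := summable_np1 hrabs
  refine hasDerivAt_tsum_of_isPreconnected hu (isOpen_Ioo (a := -r) (b := r))
    (convex_Ioo _ _).isPreconnected
    (g := fun n y => y ^ (n + 1) * c n) (g' := fun n y => ((n : ℝ) + 1) * y ^ n * c n)
    (fun n y _ => ?_) (fun n y hy => ?_) (y₀ := x) ?_ ?_ ?_
  · have h := (hasDerivAt_pow (n + 1) y).mul_const (c n)
    convert h using 1
    · rfl
    · push_cast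
      ring_nf
  · have hyr : |y| ≤ r := by
      rw [abs_le]
      exact ⟨hy.1.le, hy.2.le⟩
    rw [Real.norm_eq_abs, abs_mul, abs_mul]
    have h1 : |(n : ℝ) + 1| = (n : ℝ) + 1 := abs_of_nonneg (by positivity)
    rw [h1]
    calc ((n : ℝ) + 1) * |y ^ n| * |c n| ≤ ((n : ℝ) + 1) * r ^ n * 1 := by
          apply mul_le_mul
          · apply mul_le_mul_of_nonneg_left _ (by positivity)
            rw [abs_pow]
            exact pow_le_pow_left₀ (abs_nonneg y) hyr n
          · exact hc n
          · exact abs_nonneg _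
          · positivity
      _ = ((n : ℝ) + 1) * r ^ n := mul_one _
  · exact Set.mem_Ioo.2 ⟨neg_lt_of_abs_lt hxr, lt_of_abs_lt hxr⟩
  · apply Summable.of_norm
    apply Summable.of_nonneg_of_le (fun n => norm_nonneg _) (fun n => ?_) hu
    rw [Real.norm_eq_abs, abs_mul, abs_pow]
    calc |x| ^ (n + 1) * |c n| ≤ |x| ^ n * 1 := by
          apply mul_le_mul _ (hc n) (abs_nonneg _) (by positivity)
          calc |x| ^ (n + 1) = |x| ^ n * |x| := pow_succ _ _
            _ ≤ |x| ^ n * 1 := by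
                apply mul_le_mul_of_nonneg_left hx.le (by positivity)
            _ = |x| ^ n := mul_one _
      _ = |x| ^ n := mul_one _
      _ ≤ ((n : ℝ) + 1) * r ^ n := by
          calc |x| ^ n ≤ r ^ n := pow_le_pow_left₀ (abs_nonneg x) hxr.le n
            _ = 1 * r ^ n := (one_mul _).symm
            _ ≤ ((n : ℝ) + 1) * r ^ n := by
                apply mul_le_mul_of_nonneg_right _ (by positivity)
                linarith [Nat.cast_nonneg (α := ℝ) n]
  · exact Set.mem_Ioo.2 ⟨neg_lt_of_abs_lt hxr, lt_of_abs_lt hxr⟩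

lemma hasDerivAt_Li21 {x : ℝ} (hx0 : 0 < x) (hx1 : x < 1) :
    HasDerivAt Li21 (Real.log (1 - x) ^ 2 / (2 * x)) x := by
  have habs : |x| < 1 := by rw [abs_of_pos hx0]; exact hx1
  have hc : ∀ n : ℕ, |H n / ((n : ℝ) + 1) ^ 2| ≤ 1 := by
    intro n
    rw [abs_of_nonneg (div_nonneg (H_nonneg n) (by positivity))]
    rw [div_le_one (by positivity)]
    nlinarith [H_le n, Nat.cast_nonneg (α := ℝ) n]
  have h := hasDerivAt_series (fun n => H n / ((n : ℝ) + 1) ^ 2) hc habs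
  have hfun : Li21 = fun y => ∑' n : ℕ, y ^ (n + 1) * (H n / ((n : ℝ) + 1) ^ 2) := by
    funext y; exact tsum_congr fun n => by rw [mul_div_assoc]
  rw [hfun]
  convert h using 1
  have hA := (hasSum_A habs).mul_left (1 / x)
  have hx' : x ≠ 0 := ne_of_gt hx0
  have heq : (fun n : ℕ => (1 / x) * (x ^ (n + 1) * H n / ((n : ℝ) + 1)))
      = fun n : ℕ => ((n : ℝ) + 1) * x ^ n * (H n / ((n : ℝ) + 1) ^ 2) := by
    funext n
    have hn : ((n : ℝ) + 1) ≠ 0 := by positivity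
    rw [pow_succ]
    field_simp
  rw [heq] at hA
  rw [hA.tsum_eq]
  ring

lemma hasDerivAt_Li2 {x : ℝ} (hx0 : 0 < x) (hx1 : x < 1) :
    HasDerivAt (Li 2) (-Real.log (1 - x) / x) x := by
  have habs : |x| < 1 := by rw [abs_of_pos hx0]; exact hx1
  have hc : ∀ n : ℕ, |(1 : ℝ) / ((n : ℝ) + 1) ^ 2| ≤ 1 := by
    intro n
    rw [abs_of_nonneg (by positivity)]
    rw [div_le_one (by positivity)]
    exact one_le_pow₀ (by linarith [Nat.cast_nonneg (α := ℝ) n])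
  have h := hasDerivAt_series (fun n => (1:ℝ) / ((n : ℝ) + 1) ^ 2) hc habs
  have hfun : Li 2 = fun y => ∑' n : ℕ, y ^ (n + 1) * ((1:ℝ) / ((n : ℝ) + 1) ^ 2) := by
    funext y; exact tsum_congr fun n => by rw [mul_one_div]
  rw [hfun]
  convert h using 1
  have hA := (Real.hasSum_pow_div_log_of_abs_lt_one habs).mul_left (1 / x)
  have hx' : x ≠ 0 := ne_of_gt hx0
  have heq : (fun n : ℕ => (1 / x) * (x ^ (n + 1) / ((n : ℝ) + 1)))
      = fun n : ℕ => ((n : ℝ) + 1) * x ^ n * ((1:ℝ) / ((n : ℝ) + 1) ^ 2) := by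
    funext n
    have hn : ((n : ℝ) + 1) ≠ 0 := by positivity
    rw [pow_succ]
    field_simp
  rw [heq] at hA
  rw [hA.tsum_eq]
  ring

lemma hasDerivAt_Li3 {x : ℝ} (hx0 : 0 < x) (hx1 : x < 1) :
    HasDerivAt (Li 3) (Li 2 x / x) x := by
  have habs : |x| < 1 := by rw [abs_of_pos hx0]; exact hx1
  have hc : ∀ n : ℕ, |(1 : ℝ) / ((n : ℝ) + 1) ^ 3| ≤ 1 := by
    intro n
    rw [abs_of_nonneg (by positivity)]
    rw [div_le_one (by positivity)]
    exact one_le_pow₀ (by linarith [Nat.cast_nonneg (α := ℝ) n])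
  have h := hasDerivAt_series (fun n => (1:ℝ) / ((n : ℝ) + 1) ^ 3) hc habs
  have hfun : Li 3 = fun y => ∑' n : ℕ, y ^ (n + 1) * ((1:ℝ) / ((n : ℝ) + 1) ^ 3) := by
    funext y; exact tsum_congr fun n => by rw [mul_one_div]
  rw [hfun]
  convert h using 1
  have hsum : HasSum (fun n : ℕ => x ^ (n + 1) / ((n : ℝ) + 1) ^ 2) (Li 2 x) :=
    (summable_norm_Li 2 habs).of_norm.hasSum
  have hA := hsum.mul_left (1 / x)
  have hx' : x ≠ 0 := ne_of_gt hx0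
  have heq : (fun n : ℕ => (1 / x) * (x ^ (n + 1) / ((n : ℝ) + 1) ^ 2))
      = fun n : ℕ => ((n : ℝ) + 1) * x ^ n * ((1:ℝ) / ((n : ℝ) + 1) ^ 3) := by
    funext n
    have hn : ((n : ℝ) + 1) ≠ 0 := by positivity
    rw [pow_succ]
    field_simp
  rw [heq] at hA
  rw [hA.tsum_eq]
  ring

lemma Li_contOn (m : ℕ) (hm : 2 ≤ m) : ContinuousOn (Li m) (Set.Icc (-1 : ℝ) 1) := by
  have hu : Summable fun n : ℕ => 1 / ((n : ℝ) + 1) ^ 2 := by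
    have h := (summable_nat_add_iff (f := fun n : ℕ => 1 / (n : ℝ) ^ 2) 1).2
      (summable_one_div_nat_pow.2 one_lt_two)
    exact h.congr fun n => by push_cast; ring
  unfold Li
  apply continuousOn_tsum (fun n => ((continuous_pow (n+1)).div_const _).continuousOn) hu
  intro n y hy
  rcases Set.mem_Icc.1 hy with ⟨h1, h2⟩
  have hya : |y| ≤ 1 := abs_le.2 ⟨h1, h2⟩
  rw [Real.norm_eq_abs, abs_div, abs_pow, abs_of_nonneg (a := ((n:ℝ)+1)^m) (by positivity)]
  have hnum : |y| ^ (n+1) ≤ 1 := pow_le_one₀ (abs_nonneg y) hya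
  have hden : ((n : ℝ) + 1) ^ 2 ≤ ((n : ℝ) + 1) ^ m :=
    pow_le_pow_right₀ (by linarith [Nat.cast_nonneg (α := ℝ) n]) hm
  calc |y| ^ (n+1) / ((n:ℝ)+1) ^ m ≤ 1 / ((n:ℝ)+1) ^ m := by gcongr
    _ ≤ 1 / ((n:ℝ)+1) ^ 2 := by
        apply div_le_div_of_nonneg_left one_pos.le (by positivity) hden

lemma tendsto_Li_one (m : ℕ) (hm : 2 ≤ m) :
    Tendsto (fun y => Li m (1 - y)) (𝓝[>] (0:ℝ)) (𝓝 (Li m 1)) := by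
  have hmap : Tendsto (fun y : ℝ => 1 - y) (𝓝[>] (0:ℝ)) (𝓝[Set.Icc (-1:ℝ) 1] 1) := by
    apply tendsto_nhdsWithin_of_tendsto_nhds_of_eventually_within
    · have : Tendsto (fun y : ℝ => 1 - y) (𝓝 (0:ℝ)) (𝓝 (1 - 0)) :=
        (continuous_const.sub continuous_id).tendsto 0
      simpa using this.mono_left nhdsWithin_le_nhds
    · filter_upwards [Ioo_mem_nhdsGT_of_mem
        (Set.mem_Ico.mpr ⟨le_rfl, one_pos⟩)] with y hy
      exact Set.mem_Icc.2 ⟨by linarith [hy.2], by linarith [hy.1]⟩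
  have hLc : Tendsto (Li m) (𝓝[Set.Icc (-1:ℝ) 1] 1) (𝓝 (Li m 1)) :=
    (Li_contOn m hm) 1 (by norm_num)
  exact hLc.comp hmap

lemma tendsto_Li21_zero : Tendsto Li21 (𝓝[>] (0:ℝ)) (𝓝 0) := by
  have hcont : ContinuousOn Li21 (Set.Icc (-(1/2) : ℝ) (1/2)) := by
    unfold Li21
    apply continuousOn_tsum
      (fun n => (((continuous_pow (n+1)).mul continuous_const).div_const _).continuousOn)
      (summable_geometric_of_lt_one (r := (1/2:ℝ)) (by norm_num) (by norm_num))
    intro n y hy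
    rcases Set.mem_Icc.1 hy with ⟨h1, h2⟩
    have hya : |y| ≤ 1/2 := abs_le.2 ⟨h1, h2⟩
    rw [Real.norm_eq_abs, abs_div, Pi.mul_apply, abs_mul, abs_pow,
      abs_of_nonneg (a := ((n:ℝ)+1)^2) (by positivity), abs_of_nonneg (H_nonneg n)]
    have hH : H n / ((n : ℝ) + 1) ^ 2 ≤ 1 := by
      rw [div_le_one (by positivity)]
      nlinarith [H_le n, Nat.cast_nonneg (α := ℝ) n]
    calc |y| ^ (n+1) * H n / ((n:ℝ)+1) ^ 2
        = |y| ^ (n+1) * (H n / ((n:ℝ)+1) ^ 2) := by ring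
      _ ≤ (1/2) ^ (n+1) * 1 := by
          apply mul_le_mul _ hH (div_nonneg (H_nonneg n) (by positivity)) (by positivity)
          exact pow_le_pow_left₀ (abs_nonneg y) hya (n+1)
      _ = (1/2) ^ (n+1) := mul_one _
      _ ≤ (1/2 : ℝ) ^ n := by
          apply pow_le_pow_of_le_one (by norm_num) (by norm_num)
          omega
  have h0 : Li21 0 = 0 := by
    unfold Li21
    simp
  have hmap : Tendsto (fun y : ℝ => y) (𝓝[>] (0:ℝ)) (𝓝[Set.Icc (-(1/2):ℝ) (1/2)] 0) := by
    apply tendsto_nhdsWithin_of_tendsto_nhds_of_eventually_within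
    · exact tendsto_id.mono_left nhdsWithin_le_nhds
    · filter_upwards [Ioo_mem_nhdsGT_of_mem
        (Set.mem_Ico.mpr ⟨le_rfl, (by norm_num : (0:ℝ) < 1/2)⟩)] with y hy
      exact Set.mem_Icc.2 ⟨by linarith [hy.1], hy.2.le⟩
  have hLc : Tendsto Li21 (𝓝[Set.Icc (-(1/2):ℝ) (1/2)] 0) (𝓝 (Li21 0)) :=
    hcont 0 (by norm_num)
  have := hLc.comp hmap
  rwa [h0] at this

lemma Li3_one : Li 3 1 = zeta3 := by
  unfold Li zeta3
  simp

lemma tendsto_log_cube : Tendsto (fun y : ℝ => 1 / 2 * Real.log y * Real.log (1 - y) ^ 2)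
    (𝓝[>] (0:ℝ)) (𝓝 0) := by
  have h1 : Tendsto (fun y : ℝ => Real.log y * y) (𝓝[>] (0:ℝ)) (𝓝 0) := by
    have := tendsto_log_mul_rpow_nhdsGT_zero one_pos
    refine this.congr' ?_
    filter_upwards [self_mem_nhdsWithin] with y hy
    rw [Real.rpow_one]
  have h2 : Tendsto (fun y : ℝ => Real.log (1 - y) / y) (𝓝[>] (0:ℝ)) (𝓝 (-1)) := by
    have hlin : HasDerivAt (fun y : ℝ => 1 - y) (-1) 0 := by
      simpa using (hasDerivAt_id (0:ℝ)).const_sub 1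
    have hd : HasDerivAt (fun y : ℝ => Real.log (1 - y)) (-1) 0 := by
      have h := (Real.hasDerivAt_log (by norm_num : (1:ℝ) - 0 ≠ 0)).comp 0 hlin
      simpa [Function.comp_def] using h
    have hs := hasDerivAt_iff_tendsto_slope.mp hd
    have heq : slope (fun y : ℝ => Real.log (1 - y)) 0 = fun y => Real.log (1 - y) / y := by
      funext y
      simp [slope_def_field]
    rw [heq] at hs
    exact hs.mono_left (nhdsWithin_mono 0 (fun y hy => ne_of_gt hy))
  have h3 : Tendsto (fun y : ℝ => Real.log (1 - y)) (𝓝[>] (0:ℝ)) (𝓝 0) := by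
    have hca : ContinuousAt (fun y : ℝ => Real.log (1 - y)) 0 :=
      (Real.continuousAt_log (by norm_num : (1:ℝ) - 0 ≠ 0)).comp
        ((continuous_const.sub continuous_id).continuousAt)
    have h := hca.tendsto
    simp only [sub_zero, Real.log_one] at h
    exact h.mono_left nhdsWithin_le_nhds
  have hmain : Tendsto
      (fun y : ℝ => 1 / 2 * ((Real.log y * y) * ((Real.log (1 - y) / y) * Real.log (1 - y))))
      (𝓝[>] (0:ℝ)) (𝓝 (1 / 2 * ((0 : ℝ) * ((-1) * 0)))) :=
    tendsto_const_nhds.mul ((h1.mul (h2.mul h3)))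
  have hmain' : Tendsto
      (fun y : ℝ => 1 / 2 * ((Real.log y * y) * ((Real.log (1 - y) / y) * Real.log (1 - y))))
      (𝓝[>] (0:ℝ)) (𝓝 0) := by simpa using hmain
  refine hmain'.congr' ?_
  filter_upwards [self_mem_nhdsWithin] with y hy
  have hy' : y ≠ 0 := ne_of_gt hy
  field_simp

theorem stmt11 (x : ℝ) (hx0 : 0 < x) (hx1 : x < 1) :
    Li21 x = zeta3 - Li 3 (1 - x) + Real.log (1 - x) * Li 2 (1 - x) +
      1 / 2 * Real.log x * Real.log (1 - x) ^ 2 := by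
  set F : ℝ → ℝ := fun y => Li21 y - (zeta3 - Li 3 (1 - y) + Real.log (1 - y) * Li 2 (1 - y) +
    1 / 2 * Real.log y * Real.log (1 - y) ^ 2) with hF_def
  suffices h : F x = 0 by
    have := h
    simp only [hF_def] at this
    linarith
  have hderiv : ∀ y ∈ Set.Ioo (0:ℝ) 1, HasDerivAt F 0 y := by
    intro y hy
    obtain ⟨hy0, hy1⟩ := hy
    have hz0 : 0 < 1 - y := by linarith
    have hz1 : 1 - y < 1 := by linarith
    have hyne : y ≠ 0 := ne_of_gt hy0
    have hzne : (1:ℝ) - y ≠ 0 := ne_of_gt hz0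
    have hlin : HasDerivAt (fun w : ℝ => 1 - w) (-1) y := by
      simpa using (hasDerivAt_id y).const_sub 1
    have h1 : HasDerivAt Li21 (Real.log (1 - y) ^ 2 / (2 * y)) y := hasDerivAt_Li21 hy0 hy1
    have h3' : HasDerivAt (fun w => Li 3 (1 - w)) (Li 2 (1 - y) / (1 - y) * (-1)) y :=
      (hasDerivAt_Li3 hz0 hz1).comp y hlin
    have hlog1 : HasDerivAt (fun w : ℝ => Real.log (1 - w)) ((1 - y)⁻¹ * (-1)) y :=
      (Real.hasDerivAt_log hzne).comp y hlin
    have hLi2c : HasDerivAt (fun w => Li 2 (1 - w))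
        (-Real.log (1 - (1 - y)) / (1 - y) * (-1)) y :=
      (hasDerivAt_Li2 hz0 hz1).comp y hlin
    rw [show (1:ℝ) - (1 - y) = y by ring] at hLi2c
    have hlogy : HasDerivAt Real.log y⁻¹ y := Real.hasDerivAt_log hyne
    have hRHS := (((hasDerivAt_const y zeta3).sub h3').add (hlog1.mul hLi2c)).add
      (((hasDerivAt_const y ((1:ℝ)/2)).mul hlogy).mul (hlog1.pow 2))
    have hF' := h1.sub hRHS
    refine hF'.congr_deriv ?_
    simp only [Pi.mul_apply, Pi.pow_apply]
    field_simp
    ring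
  have hconst : ∀ y ∈ Set.Ioo (0:ℝ) 1, F y = F x := by
    intro y hy
    have h0 := (convex_Ioo (0:ℝ) 1).norm_image_sub_le_of_norm_hasDerivWithin_le
      (f' := fun _ => (0:ℝ)) (C := 0)
      (fun z hz => (hderiv z hz).hasDerivWithinAt) (fun z _ => by simp) hy ⟨hx0, hx1⟩
    rw [zero_mul] at h0
    have := norm_le_zero_iff.1 h0
    have := sub_eq_zero.1 this
    linarith [this]
  have hlim0 : Tendsto F (𝓝[>] (0:ℝ)) (𝓝 0) := by
    have hA := tendsto_Li21_zero
    have hB := tendsto_Li_one 3 (by norm_num)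
    have hC := tendsto_Li_one 2 (by norm_num)
    have hD : Tendsto (fun y : ℝ => Real.log (1 - y)) (𝓝[>] (0:ℝ)) (𝓝 0) := by
      have hca : ContinuousAt (fun y : ℝ => Real.log (1 - y)) 0 :=
        (Real.continuousAt_log (by norm_num : (1:ℝ) - 0 ≠ 0)).comp
          ((continuous_const.sub continuous_id).continuousAt)
      have h := hca.tendsto
      simp only [sub_zero, Real.log_one] at h
      exact h.mono_left nhdsWithin_le_nhds
    have hE := tendsto_log_cube
    have hall : Tendsto F (𝓝[>] (0:ℝ))
        (𝓝 (0 - (zeta3 - Li 3 1 + 0 * Li 2 1 + 0))) := by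
      exact hA.sub (((tendsto_const_nhds.sub hB).add (hD.mul hC)).add hE)
    have : (0 : ℝ) - (zeta3 - Li 3 1 + 0 * Li 2 1 + 0) = 0 := by
      rw [Li3_one]; ring
    rwa [this] at hall
  have hlimc : Tendsto F (𝓝[>] (0:ℝ)) (𝓝 (F x)) := by
    have hev : F =ᶠ[𝓝[>] (0:ℝ)] fun _ => F x := by
      filter_upwards [Ioo_mem_nhdsGT_of_mem
        (Set.mem_Ico.mpr ⟨le_rfl, one_pos⟩)] with y hy
      exact hconst y hy
    exact (tendsto_congr' hev).2 tendsto_const_nhds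
  exact tendsto_nhds_unique hlimc hlim0
end

section
/- For a, b ≥ 1 and 0 < z < 1, the Nielsen polylogarithm S_{a,b}(z) := ((-1)^(a-1+b) / ((a-1)! b!)) * ∫_0^1 (ln^(a-1)(t) * ln^b(1 - z t) / t) dt equals the multiple polylogarithm Li_{a+1, 1, ..., 1}(z) (with b-1 trailing ones), i.e., ∑_{n_1 > n_2 > ... > n_b ≥ 1} z^{n_1} / (n_1^{a+1} * n_2 * ... * n_b). -/
open Real Finset

noncomputable def MH : ℕ → ℕ → ℝ
  | 0, _ => 1
  | (d + 1), n => ∑ k ∈ Finset.range n, MH d k / (k : ℝ)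

lemma MH_nonneg (d n : ℕ) : 0 ≤ MH d n := by
  induction d generalizing n with
  | zero => simp [MH]
  | succ d ih =>
    rw [MH]
    exact Finset.sum_nonneg fun k _ => div_nonneg (ih k) (Nat.cast_nonneg k)

lemma MH_le (d n : ℕ) : MH d n ≤ (n : ℝ) ^ d := by
  induction d generalizing n with
  | zero => simp [MH]
  | succ d ih =>
    rw [MH]
    calc ∑ k ∈ Finset.range n, MH d k / (k : ℝ) ≤ ∑ k ∈ Finset.range n, (n : ℝ) ^ d := by
          refine Finset.sum_le_sum fun k hk => ?_
          rcases Nat.eq_zero_or_pos k with h | h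
          · simp [h]
          · have hk1 : (1 : ℝ) ≤ (k : ℝ) := by exact_mod_cast h
            calc MH d k / (k : ℝ) ≤ MH d k := div_le_self (MH_nonneg d k) hk1
              _ ≤ (k : ℝ) ^ d := ih k
              _ ≤ (n : ℝ) ^ d := by
                  have : (k : ℝ) ≤ (n : ℝ) := by
                    exact_mod_cast (Finset.mem_range.mp hk).le
                  exact pow_le_pow_left₀ (Nat.cast_nonneg k) this d
      _ = (n : ℝ) ^ (d + 1) := by
          rw [Finset.sum_const, Finset.card_range, nsmul_eq_mul, pow_succ]; ring

lemma MH_one (d : ℕ) : MH (d + 1) 1 = 0 := by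
  rw [MH]; simp

lemma MH_succ_succ (d m : ℕ) :
    MH (d + 1) (m + 2) = MH (d + 1) (m + 1) + MH d (m + 1) / ((m : ℝ) + 1) := by
  show (∑ k ∈ Finset.range (m + 2), MH d k / (k : ℝ)) = _
  rw [Finset.sum_range_succ,
    show MH (d + 1) (m + 1) = ∑ k ∈ Finset.range (m + 1), MH d k / (k : ℝ) from rfl]
  push_cast
  ring

lemma summable_aux_s17 (d : ℕ) {r : ℝ} (h0 : 0 < r) (h1 : r < 1) :
    Summable (fun m : ℕ => ((m : ℝ) + 1) ^ d * r ^ m) := by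
  have h : ‖r‖ < 1 := by rwa [Real.norm_eq_abs, abs_of_pos h0]
  have h2 := summable_pow_mul_geometric_of_norm_lt_one d h
  have h3 : Summable (fun n : ℕ => ((n + 1 : ℕ) : ℝ) ^ d * r ^ (n + 1)) :=
    (summable_nat_add_iff 1).mpr h2
  have h4 := h3.mul_left r⁻¹
  refine h4.congr fun m => ?_
  push_cast
  rw [pow_succ]
  field_simp

lemma summable_of_bound (f : ℕ → ℝ) (d : ℕ) (K : ℝ) {r : ℝ} (h0 : 0 < r) (h1 : r < 1)
    (hf : ∀ m, |f m| ≤ K * (((m : ℝ) + 1) ^ d * r ^ m)) : Summable f := by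
  refine Summable.of_abs (Summable.of_nonneg_of_le (fun m => abs_nonneg _) hf ?_)
  exact (summable_aux_s17 d h0 h1).mul_left K

section P2
variable {x : ℝ}

lemma abs_le_mid {x : ℝ} (hx : |x| < 1) : |x| ≤ (|x| + 1) / 2 := by linarith
lemma mid_pos {x : ℝ} (hx : |x| < 1) : 0 < (|x| + 1) / 2 := by positivity
lemma mid_lt_one {x : ℝ} (hx : |x| < 1) : (|x| + 1) / 2 < 1 := by linarith

lemma summable_B (d : ℕ) {x : ℝ} (hx : |x| < 1) :
    Summable (fun m : ℕ => MH d (m + 1) * x ^ m) := by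
  refine summable_of_bound _ d 1 (mid_pos hx) (mid_lt_one hx) fun m => ?_
  rw [one_mul, abs_mul, abs_pow]
  have h1 : |MH d (m + 1)| ≤ ((m : ℝ) + 1) ^ d := by
    rw [abs_of_nonneg (MH_nonneg d (m + 1))]
    have := MH_le d (m + 1); push_cast at this; exact this
  have h2 : |x| ^ m ≤ ((|x| + 1) / 2) ^ m :=
    pow_le_pow_left₀ (abs_nonneg x) (abs_le_mid hx) m
  have h3 : (0:ℝ) ≤ ((m : ℝ) + 1) ^ d := by positivity
  exact mul_le_mul h1 h2 (pow_nonneg (abs_nonneg x) m) h3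

lemma summable_F (d : ℕ) {x : ℝ} (hx : |x| < 1) :
    Summable (fun m : ℕ => x ^ (m + 1) * MH d (m + 1) / ((m : ℝ) + 1)) := by
  refine summable_of_bound _ d 1 (mid_pos hx) (mid_lt_one hx) fun m => ?_
  rw [one_mul, abs_div, abs_mul, abs_pow]
  have hm1 : (0:ℝ) < (m:ℝ) + 1 := by positivity
  rw [abs_of_pos hm1]
  have h1 : |MH d (m + 1)| ≤ ((m : ℝ) + 1) ^ d := by
    rw [abs_of_nonneg (MH_nonneg d (m + 1))]
    have := MH_le d (m + 1); push_cast at this; exact this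
  have h2 : |x| ^ (m + 1) ≤ ((|x| + 1) / 2) ^ m := by
    calc |x| ^ (m + 1) ≤ |x| ^ m := pow_le_pow_of_le_one (abs_nonneg x) hx.le (by omega)
      _ ≤ ((|x| + 1) / 2) ^ m := pow_le_pow_left₀ (abs_nonneg x) (abs_le_mid hx) m
  calc |x| ^ (m+1) * |MH d (m+1)| / ((m:ℝ)+1)
      ≤ |x| ^ (m+1) * |MH d (m+1)| :=
        div_le_self (by positivity) (by linarith)
    _ ≤ ((|x| + 1) / 2) ^ m * (((m:ℝ)+1) ^ d) := by
        refine mul_le_mul h2 h1 (abs_nonneg _) (by positivity)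
    _ = ((m : ℝ) + 1) ^ d * ((|x| + 1) / 2) ^ m := by ring

lemma telescope (d : ℕ) {x : ℝ} (hx : |x| < 1) :
    (1 - x) * ∑' m : ℕ, MH (d + 1) (m + 1) * x ^ m
      = ∑' m : ℕ, x ^ (m + 1) * MH d (m + 1) / ((m : ℝ) + 1) := by
  have hB := summable_B (d + 1) hx
  have hB' : Summable (fun m : ℕ => MH (d + 1) (m + 2) * x ^ (m + 1)) :=
    (summable_nat_add_iff 1).mpr hB
  have hxB : Summable (fun m : ℕ => MH (d + 1) (m + 1) * x ^ (m + 1)) := by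
    have := hB.mul_left x
    refine this.congr fun m => ?_; ring
  have e1 : ∑' m : ℕ, MH (d + 1) (m + 1) * x ^ m
      = ∑' m : ℕ, MH (d + 1) (m + 2) * x ^ (m + 1) := by
    rw [Summable.tsum_eq_zero_add hB]
    simp [MH_one]
  have e2 : x * ∑' m : ℕ, MH (d + 1) (m + 1) * x ^ m
      = ∑' m : ℕ, MH (d + 1) (m + 1) * x ^ (m + 1) := by
    rw [← tsum_mul_left]; exact tsum_congr fun m => by ring
  rw [sub_mul, one_mul, e2, e1, ← Summable.tsum_sub hB' hxB]
  refine tsum_congr fun m => ?_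
  rw [MH_succ_succ]
  ring

lemma hasDerivAt_F (d : ℕ) {r : ℝ} (h0 : 0 < r) (h1 : r < 1) {y : ℝ}
    (hy : y ∈ Metric.ball (0:ℝ) r) :
    HasDerivAt (fun u : ℝ => ∑' m : ℕ, u ^ (m + 1) * MH d (m + 1) / ((m : ℝ) + 1))
      (∑' m : ℕ, MH d (m + 1) * y ^ m) y := by
  refine hasDerivAt_tsum_of_isPreconnected
    (u := fun m : ℕ => ((m : ℝ) + 1) ^ d * r ^ m)
    (summable_aux_s17 d h0 h1) Metric.isOpen_ball
    (Convex.isPreconnected (convex_ball 0 r))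
    (g := fun (m : ℕ) (u : ℝ) => u ^ (m + 1) * MH d (m + 1) / ((m : ℝ) + 1))
    (g' := fun (m : ℕ) (u : ℝ) => MH d (m + 1) * u ^ m)
    (fun m w hw => ?_) (fun m w hw => ?_)
    (y₀ := 0) (Metric.mem_ball_self h0) ?_ hy
  · have h := (hasDerivAt_pow (m + 1) w).mul_const (MH d (m + 1) / ((m : ℝ) + 1))
    refine (h.congr_deriv ?_).congr_of_eventuallyEq (Filter.Eventually.of_forall fun u => ?_)
    · push_cast
      field_simp
    · beta_reduce
      ring
  · have hw' : |w| < r := by simpa [Real.dist_eq] using hw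
    rw [Real.norm_eq_abs, abs_mul, abs_pow]
    have h1' : |MH d (m + 1)| ≤ ((m : ℝ) + 1) ^ d := by
      rw [abs_of_nonneg (MH_nonneg d (m + 1))]
      have := MH_le d (m + 1); push_cast at this; exact this
    exact mul_le_mul h1' (pow_le_pow_left₀ (abs_nonneg w) hw'.le m)
      (pow_nonneg (abs_nonneg w) m) (by positivity)
  · refine summable_zero.congr fun m => ?_
    simp

end P2

lemma hasDerivAt_G (d : ℕ) {y : ℝ} (hy : y < 1) :
    HasDerivAt (fun u : ℝ => (-Real.log (1 - u)) ^ (d + 2) / (Nat.factorial (d + 2) : ℝ))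
      ((-Real.log (1 - y)) ^ (d + 1) / ((Nat.factorial (d + 1) : ℝ) * (1 - y))) y := by
  have h1y : (0:ℝ) < 1 - y := by linarith
  have h1 : HasDerivAt (fun u : ℝ => 1 - u) (-1) y := (hasDerivAt_id y).const_sub 1
  have h2 := (Real.hasDerivAt_log (ne_of_gt h1y)).comp y h1
  have h3 : HasDerivAt (fun u : ℝ => -Real.log (1 - u)) ((1 - y)⁻¹) y := by
    have := h2.neg
    refine this.congr_deriv ?_
    simp
  have h4 := (h3.pow (d + 2)).div_const (Nat.factorial (d + 2) : ℝ)
  refine h4.congr_deriv ?_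
  have hfac : (Nat.factorial (d + 2) : ℝ) = ((d : ℝ) + 2) * (Nat.factorial (d + 1) : ℝ) := by
    rw [show d + 2 = (d + 1) + 1 from rfl, Nat.factorial_succ]
    push_cast; ring
  have hfac1 : (Nat.factorial (d + 1) : ℝ) ≠ 0 := by positivity
  rw [hfac]
  have : (↑(d + 2) : ℝ) = (d : ℝ) + 2 := by push_cast; ring
  rw [show d + 2 - 1 = d + 1 from rfl, this]
  field_simp

lemma key (d : ℕ) : ∀ {x : ℝ}, 0 ≤ x → x < 1 →
    ∑' m : ℕ, x ^ (m + 1) * MH d (m + 1) / ((m : ℝ) + 1)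
      = (-Real.log (1 - x)) ^ (d + 1) / (Nat.factorial (d + 1) : ℝ) := by
  induction d with
  | zero =>
    intro x hx0 hx1
    have habs : |x| < 1 := abs_lt.mpr ⟨by linarith, hx1⟩
    have h := Real.hasSum_pow_div_log_of_abs_lt_one habs
    rw [pow_one]
    norm_num [Nat.factorial]
    rw [← h.tsum_eq]
    exact tsum_congr fun m => by rw [show MH 0 (m+1) = 1 by simp [MH]]; ring
  | succ d ih =>
    intro x hx0 hx1
    set r : ℝ := (x + 1) / 2 with hr
    have hr0 : 0 < r := by positivity
    have hr1 : r < 1 := by rw [hr]; linarith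
    have hmem : ∀ y ∈ Set.Icc (0:ℝ) x, y ∈ Metric.ball (0:ℝ) r := by
      intro y hy
      rw [Metric.mem_ball, Real.dist_eq, sub_zero, abs_of_nonneg hy.1]
      have := hy.2; rw [hr]; linarith
    set Fn : ℝ → ℝ := fun u => ∑' m : ℕ, u ^ (m + 1) * MH (d + 1) (m + 1) / ((m : ℝ) + 1)
      with hFn
    set Gn : ℝ → ℝ := fun u => (-Real.log (1 - u)) ^ (d + 2) / (Nat.factorial (d + 2) : ℝ)
      with hGn
    have hderiv_eq : ∀ y ∈ Set.Icc (0:ℝ) x, y < 1 → HasDerivWithinAt (fun u => Fn u - Gn u) 0 (Set.Ici y) y := by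
      intro y hy hy1
      have habs : |y| < 1 := abs_lt.mpr ⟨by linarith [hy.1], hy1⟩
      have hF := hasDerivAt_F (d + 1) hr0 hr1 (hmem y hy)
      have hG := hasDerivAt_G d hy1
      have hval : (∑' m : ℕ, MH (d + 1) (m + 1) * y ^ m)
          = (-Real.log (1 - y)) ^ (d + 1) / ((Nat.factorial (d + 1) : ℝ) * (1 - y)) := by
        have htel := telescope d habs
        rw [ih hy.1 hy1] at htel
        have h1y : (1:ℝ) - y ≠ 0 := by linarith
        field_simp at htel ⊢
        linarith [htel]
      have := (hF.sub hG)
      rw [hval, sub_self] at this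
      exact this.hasDerivWithinAt
    have hcont : ContinuousOn (fun u => Fn u - Gn u) (Set.Icc 0 x) := by
      intro y hy
      have hy1 : y < 1 := lt_of_le_of_lt hy.2 hx1
      have hF := hasDerivAt_F (d + 1) hr0 hr1 (hmem y hy)
      have hG := hasDerivAt_G d hy1
      exact ((hF.sub hG).continuousAt).continuousWithinAt
    have h0 : Fn 0 - Gn 0 = 0 := by
      rw [hFn, hGn]
      simp
    have := constant_of_has_deriv_right_zero hcont
      (fun y hy => hderiv_eq y (Set.mem_Icc.mpr ⟨hy.1, hy.2.le⟩) (lt_of_le_of_lt hy.2.le hx1))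
      x (Set.mem_Icc.mpr ⟨hx0, le_refl x⟩)
    rw [h0] at this
    have hfx : Fn x = Gn x := by linarith [sub_eq_zero.mp this]
    exact hfx

noncomputable def P (m : ℕ) : ℕ → ℝ → ℝ
  | 0 => fun t => t ^ (m + 1) / ((m : ℝ) + 1)
  | (k + 1) => fun t =>
      t ^ (m + 1) * Real.log t ^ (k + 1) / ((m : ℝ) + 1)
        - (((k : ℝ) + 1) / ((m : ℝ) + 1)) * P m k t

lemma P_deriv (m k : ℕ) {t : ℝ} (ht : 0 < t) :
    HasDerivAt (P m k) (t ^ m * Real.log t ^ k) t := by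
  have hm : ((m : ℝ) + 1) ≠ 0 := by positivity
  induction k with
  | zero =>
    have := (hasDerivAt_pow (m + 1) t).div_const ((m : ℝ) + 1)
    refine this.congr_deriv ?_
    push_cast
    field_simp
  | succ k ih =>
    have hpow : HasDerivAt (fun u : ℝ => u ^ (m + 1)) (((m : ℝ) + 1) * t ^ m) t := by
      have := hasDerivAt_pow (m + 1) t
      refine this.congr_deriv ?_
      push_cast
      ring
    have hlogp : HasDerivAt (fun u : ℝ => Real.log u ^ (k + 1))
        (((k : ℝ) + 1) * Real.log t ^ k * t⁻¹) t := by
      have := ((Real.hasDerivAt_log (ne_of_gt ht)).pow (k + 1))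
      refine this.congr_deriv ?_
      push_cast
      ring
    have hmul := (hpow.mul hlogp).div_const ((m : ℝ) + 1)
    have := hmul.sub ((ih).const_mul (((k : ℝ) + 1) / ((m : ℝ) + 1)))
    have heq : HasDerivAt (P m (k + 1))
        ((((m : ℝ) + 1) * t ^ m * Real.log t ^ (k + 1)
          + t ^ (m + 1) * (((k : ℝ) + 1) * Real.log t ^ k * t⁻¹)) / ((m : ℝ) + 1)
          - ((k : ℝ) + 1) / ((m : ℝ) + 1) * (t ^ m * Real.log t ^ k)) t := this
    convert heq using 1
    have ht' : t ≠ 0 := ne_of_gt ht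
    field_simp
    ring

lemma P_zero (m k : ℕ) : P m k 0 = 0 := by
  induction k with
  | zero => simp [P]
  | succ k ih => simp [P, ih]

lemma P_one (m k : ℕ) :
    P m k 1 = (-1) ^ k * (Nat.factorial k : ℝ) / ((m : ℝ) + 1) ^ (k + 1) := by
  induction k with
  | zero => simp [P]
  | succ k ih =>
    simp only [P, Real.log_one, one_pow]
    rw [ih]
    rw [Nat.factorial_succ]
    push_cast
    have hm : ((m : ℝ) + 1) ≠ 0 := by positivity
    field_simp
    ring

lemma tendsto_pow_mul_log_pow (m i : ℕ) :
    Filter.Tendsto (fun t : ℝ => t ^ (m + 1) * Real.log t ^ i)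
      (nhdsWithin 0 (Set.Ioi 0)) (nhds 0) := by
  rcases Nat.eq_zero_or_pos i with hi | hi
  · subst hi
    simp only [pow_zero, mul_one]
    have : Filter.Tendsto (fun t : ℝ => t ^ (m + 1)) (nhds 0) (nhds 0) := by
      have := (continuous_pow (m + 1)).tendsto (0:ℝ)
      simpa using this
    exact this.mono_left nhdsWithin_le_nhds
  · have hr : (0:ℝ) < ((m : ℝ) + 1) / (i : ℝ) := by
      apply div_pos (by positivity) (by exact_mod_cast hi)
    have h := (tendsto_log_mul_rpow_nhdsGT_zero hr).pow i
    rw [show (0:ℝ) ^ i = 0 from zero_pow (by omega)] at h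
    refine h.congr' ?_
    filter_upwards [self_mem_nhdsWithin] with t ht
    have ht' : (0:ℝ) < t := ht
    rw [mul_pow, ← Real.rpow_natCast (t ^ (((m : ℝ) + 1) / (i : ℝ))) i,
      ← Real.rpow_mul ht'.le]
    have : ((m : ℝ) + 1) / (i : ℝ) * (i : ℕ) = ((m : ℝ) + 1) := by
      have hi' : (i : ℝ) ≠ 0 := by exact_mod_cast hi.ne'
      field_simp
    rw [this]
    rw [show ((m : ℝ) + 1) = ((m + 1 : ℕ) : ℝ) by push_cast; ring, Real.rpow_natCast]
    ring

lemma P_tendsto_zero (m k : ℕ) :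
    Filter.Tendsto (P m k) (nhdsWithin 0 (Set.Ioi 0)) (nhds 0) := by
  induction k with
  | zero =>
    have := (tendsto_pow_mul_log_pow m 0).div_const ((m : ℝ) + 1)
    simp only [pow_zero, mul_one, zero_div] at this
    exact this.congr fun t => by simp [P]
  | succ k ih =>
    have h1 := (tendsto_pow_mul_log_pow m (k + 1)).div_const ((m : ℝ) + 1)
    have h2 := ih.const_mul (((k : ℝ) + 1) / ((m : ℝ) + 1))
    have := h1.sub h2
    simp only [zero_div, mul_zero, sub_zero] at this
    exact this.congr fun t => by simp [P]

lemma P_continuousOn (m k : ℕ) : ContinuousOn (P m k) (Set.Icc 0 1) := by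
  intro y hy
  rcases eq_or_lt_of_le hy.1 with h | h
  · subst h
    rw [ContinuousWithinAt, P_zero]
    have hsub : Set.Icc (0:ℝ) 1 ⊆ insert 0 (Set.Ioi 0) := by
      intro u hu
      rcases eq_or_lt_of_le hu.1 with h' | h'
      · exact Or.inl h'.symm
      · exact Or.inr h'
    refine Filter.Tendsto.mono_left ?_ (nhdsWithin_mono _ hsub)
    rw [nhdsWithin_insert]
    rw [Filter.tendsto_sup]
    constructor
    · have h' := tendsto_pure_nhds (P m k) 0
      rwa [P_zero] at h'
    · exact P_tendsto_zero m k
  · exact ((P_deriv m k h).continuousAt).continuousWithinAt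

lemma norm_pow_log (m k : ℕ) {t : ℝ} (h0 : 0 < t) (h1 : t ≤ 1) :
    ‖t ^ m * Real.log t ^ k‖ = (-1) ^ k * (t ^ m * Real.log t ^ k) := by
  have hlog : Real.log t ≤ 0 := Real.log_nonpos h0.le h1
  rw [Real.norm_eq_abs, abs_mul, abs_pow, abs_pow, abs_of_pos h0,
    abs_of_nonpos hlog]
  ring

lemma integrableOn_pow_log (m k : ℕ) :
    MeasureTheory.IntegrableOn (fun t : ℝ => t ^ m * Real.log t ^ k)
      (Set.Ioc 0 1) MeasureTheory.volume := by
  set f : ℝ → ℝ := fun t => t ^ m * Real.log t ^ k with hf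
  have hcont : ∀ {ε : ℝ}, 0 < ε → ContinuousOn f (Set.Icc ε 1) := by
    intro ε hε
    refine ContinuousOn.mul (Continuous.continuousOn (continuous_pow m)) ?_
    refine ContinuousOn.pow ?_ k
    refine Real.continuousOn_log.mono ?_
    intro u hu
    exact ne_of_gt (lt_of_lt_of_le hε hu.1)
  set a : ℕ → ℝ := fun n => 1 / ((n : ℝ) + 2) with ha
  have ha_pos : ∀ n, 0 < a n := fun n => by positivity
  have ha_le : ∀ n, a n ≤ 1 := by
    intro n
    rw [ha]
    rw [div_le_one (by positivity)]
    linarith [Nat.cast_nonneg (α := ℝ) n]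
  have ha_tendsto : Filter.Tendsto a Filter.atTop (nhds 0) := by
    rw [ha]
    have := tendsto_one_div_add_atTop_nhds_zero_nat (𝕜 := ℝ)
    have h2 : Filter.Tendsto (fun n : ℕ => (1:ℝ) / ((n + 1 : ℕ) + 1)) Filter.atTop (nhds 0) :=
      this.comp (Filter.tendsto_add_atTop_nat 1)
    refine h2.congr fun n => by push_cast; ring_nf
  have hint : ∀ n : ℕ, MeasureTheory.IntegrableOn f (Set.Ioc (a n) 1) MeasureTheory.volume := by
    intro n
    exact ((hcont (ha_pos n)).integrableOn_Icc).mono_set Set.Ioc_subset_Icc_self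
  -- bound on norm integrals
  have hval : ∀ n : ℕ, ∫ x in (a n)..1, ‖f x‖ = (-1) ^ k * (P m k 1 - P m k (a n)) := by
    intro n
    have h1 : ∫ x in (a n)..1, ‖f x‖ = ∫ x in (a n)..1, (-1 : ℝ) ^ k * f x := by
      refine intervalIntegral.integral_congr ?_
      intro x hx
      rw [Set.uIcc_of_le (ha_le n)] at hx
      exact norm_pow_log m k (lt_of_lt_of_le (ha_pos n) hx.1) hx.2
    rw [h1, intervalIntegral.integral_const_mul]
    congr 1
    refine intervalIntegral.integral_eq_sub_of_hasDerivAt ?_ ?_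
    · intro x hx
      rw [Set.uIcc_of_le (ha_le n)] at hx
      exact P_deriv m k (lt_of_lt_of_le (ha_pos n) hx.1)
    · exact (hcont (ha_pos n)).intervalIntegrable_of_Icc (ha_le n)
  have htend : Filter.Tendsto (fun n => P m k (a n)) Filter.atTop (nhds 0) := by
    refine (P_tendsto_zero m k).comp ?_
    refine tendsto_nhdsWithin_of_tendsto_nhds_of_eventually_within _ ha_tendsto ?_
    exact Filter.Eventually.of_forall fun n => ha_pos n
  refine MeasureTheory.integrableOn_Ioc_of_intervalIntegral_norm_bounded
    (I := (Nat.factorial k : ℝ) / ((m : ℝ) + 1) ^ (k + 1) + 1)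
    (b := fun _ : ℕ => (1:ℝ)) hint ha_tendsto tendsto_const_nhds ?_
  have hev : ∀ᶠ n : ℕ in Filter.atTop, dist (P m k (a n)) 0 < 1 :=
    Metric.tendsto_nhds.mp htend 1 one_pos
  filter_upwards [hev] with n hn
  have hval' := hval n
  rw [intervalIntegral.integral_of_le (ha_le n)] at hval'
  rw [hval']
  have hP1 : |P m k 1| = (Nat.factorial k : ℝ) / ((m : ℝ) + 1) ^ (k + 1) := by
    rw [P_one, abs_div, abs_mul, abs_pow, abs_neg, abs_one, one_pow, one_mul,
      Nat.abs_cast, abs_pow, abs_of_pos (by positivity : (0:ℝ) < (m : ℝ) + 1)]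
  have hPa : |P m k (a n)| < 1 := by
    rw [Real.dist_eq, sub_zero] at hn
    exact hn
  calc (-1 : ℝ) ^ k * (P m k 1 - P m k (a n))
      ≤ |(-1 : ℝ) ^ k * (P m k 1 - P m k (a n))| := le_abs_self _
    _ = |P m k 1 - P m k (a n)| := by
        rw [abs_mul, abs_pow, abs_neg, abs_one, one_pow, one_mul]
    _ ≤ |P m k 1| + |P m k (a n)| := abs_sub _ _
    _ ≤ (Nat.factorial k : ℝ) / ((m : ℝ) + 1) ^ (k + 1) + 1 := by
        rw [hP1]; linarith

lemma integral_pow_log (m k : ℕ) :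
    ∫ t in Set.Ioc (0:ℝ) 1, t ^ m * Real.log t ^ k
      = (-1) ^ k * (Nat.factorial k : ℝ) / ((m : ℝ) + 1) ^ (k + 1) := by
  have h := intervalIntegral.integral_eq_sub_of_hasDeriv_right_of_le
    (f := P m k) (f' := fun t => t ^ m * Real.log t ^ k) zero_le_one
    (P_continuousOn m k)
    (fun x hx => (P_deriv m k hx.1).hasDerivWithinAt)
    ((intervalIntegrable_iff_integrableOn_Ioc_of_le zero_le_one).mpr (integrableOn_pow_log m k))
  rw [intervalIntegral.integral_of_le zero_le_one] at h
  rw [h, P_one, P_zero, sub_zero]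

lemma integral_norm_pow_log (m k : ℕ) :
    ∫ t in Set.Ioc (0:ℝ) 1, ‖t ^ m * Real.log t ^ k‖
      = (Nat.factorial k : ℝ) / ((m : ℝ) + 1) ^ (k + 1) := by
  have h : ∫ t in Set.Ioc (0:ℝ) 1, ‖t ^ m * Real.log t ^ k‖
      = ∫ t in Set.Ioc (0:ℝ) 1, (-1 : ℝ) ^ k * (t ^ m * Real.log t ^ k) := by
    refine MeasureTheory.setIntegral_congr_fun measurableSet_Ioc ?_
    intro t ht
    exact norm_pow_log m k ht.1 ht.2
  rw [h, MeasureTheory.integral_const_mul, integral_pow_log]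
  rw [show ((-1:ℝ)) ^ k * ((-1:ℝ) ^ k * (Nat.factorial k : ℝ) / ((m:ℝ)+1) ^ (k+1))
      = ((-1:ℝ) * (-1)) ^ k * (Nat.factorial k : ℝ) / ((m:ℝ)+1) ^ (k+1) by
    rw [mul_pow]; ring]
  norm_num

theorem stmt17 (a b : ℕ) (ha : 1 ≤ a) (hb : 1 ≤ b) (z : ℝ)
    (hz0 : 0 < z) (hz1 : z < 1) :
    (-1 : ℝ) ^ (a - 1 + b) / ((Nat.factorial (a - 1) : ℝ) * (Nat.factorial b : ℝ)) *
        ∫ t in (0 : ℝ)..1, Real.log t ^ (a - 1) * Real.log (1 - z * t) ^ b / t =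
      ∑' n : ℕ, z ^ (n + 1) * MH (b - 1) (n + 1) / ((n : ℝ) + 1) ^ (a + 1) := by
  obtain ⟨k, rfl⟩ : ∃ k, a = k + 1 := ⟨a - 1, (Nat.succ_pred_eq_of_pos ha).symm⟩
  obtain ⟨c, rfl⟩ : ∃ c, b = c + 1 := ⟨b - 1, (Nat.succ_pred_eq_of_pos hb).symm⟩
  simp only [Nat.add_sub_cancel]
  set b : ℕ := c + 1 with hbdef
  set C : ℕ → ℝ := fun m =>
    (-1 : ℝ) ^ b * (Nat.factorial b : ℝ) * z ^ (m + 1) * MH c (m + 1) / ((m : ℝ) + 1)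
    with hCdef
  set F : ℕ → ℝ → ℝ := fun m t => C m * (t ^ m * Real.log t ^ k) with hFdef
  -- Step 1 : pointwise expansion of the integrand on Ioc 0 1
  have hpt : ∀ t ∈ Set.Ioc (0:ℝ) 1,
      Real.log t ^ k * Real.log (1 - z * t) ^ b / t = ∑' m : ℕ, F m t := by
    intro t ht
    have ht0 : 0 < t := ht.1
    have hx0 : 0 ≤ z * t := by positivity
    have hx1 : z * t < 1 := by nlinarith [ht.2]
    have hsum := key c hx0 hx1
    have e : ∀ m : ℕ, F m t
        = ((-1:ℝ) ^ b * (Nat.factorial b : ℝ) * Real.log t ^ k / t)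
          * ((z * t) ^ (m + 1) * MH c (m + 1) / ((m : ℝ) + 1)) := by
      intro m
      simp only [hFdef, hCdef, mul_pow]
      have hm1 : ((m : ℝ) + 1) ≠ 0 := by positivity
      have ht' : t ≠ 0 := ne_of_gt ht0
      field_simp
      ring
    rw [tsum_congr e, tsum_mul_left, hsum]
    have hlog : Real.log (1 - z * t) ^ b = (-1:ℝ) ^ b * (-Real.log (1 - z * t)) ^ b := by
      rw [← mul_pow]; norm_num
    rw [hlog]
    have ht' : t ≠ 0 := ne_of_gt ht0
    have hfb : (Nat.factorial b : ℝ) ≠ 0 := by positivity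
    field_simp
    ring
  -- Step 2 : integrability of each term
  have hint : ∀ m : ℕ, MeasureTheory.Integrable (F m)
      (MeasureTheory.volume.restrict (Set.Ioc (0:ℝ) 1)) := by
    intro m
    exact (integrableOn_pow_log m k).const_mul (C m)
  -- Step 3 : norm integrals and their summability
  have habsC : ∀ m : ℕ, |C m|
      = (Nat.factorial b : ℝ) * z ^ (m + 1) * MH c (m + 1) / ((m : ℝ) + 1) := by
    intro m
    simp only [hCdef]
    rw [abs_div, abs_mul, abs_mul, abs_mul, abs_pow, abs_neg, abs_one, one_pow, one_mul,
      Nat.abs_cast, abs_pow, abs_of_pos hz0, abs_of_nonneg (MH_nonneg c (m + 1)),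
      abs_of_pos (by positivity : (0:ℝ) < (m : ℝ) + 1)]
  have hnorm : ∀ m : ℕ, ∫ t in Set.Ioc (0:ℝ) 1, ‖F m t‖
      = |C m| * ((Nat.factorial k : ℝ) / ((m : ℝ) + 1) ^ (k + 1)) := by
    intro m
    have : ∀ t : ℝ, ‖F m t‖ = |C m| * ‖t ^ m * Real.log t ^ k‖ := by
      intro t
      simp only [hFdef, Real.norm_eq_abs, abs_mul]
    simp_rw [this]
    rw [MeasureTheory.integral_const_mul, integral_norm_pow_log]
  have hsummable : Summable (fun m : ℕ => ∫ t in Set.Ioc (0:ℝ) 1, ‖F m t‖) := by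
    refine summable_of_bound _ c ((Nat.factorial b : ℝ) * (Nat.factorial k : ℝ)) hz0 hz1
      fun m => ?_
    rw [hnorm m]
    have hm1 : (0:ℝ) < (m : ℝ) + 1 := by positivity
    have h1 : z ^ (m + 1) ≤ z ^ m := pow_le_pow_of_le_one hz0.le hz1.le (by omega)
    have h2 : MH c (m + 1) ≤ ((m : ℝ) + 1) ^ c := by
      have := MH_le c (m + 1); push_cast at this; exact this
    have hdiv : MH c (m + 1) / ((m : ℝ) + 1) ≤ ((m : ℝ) + 1) ^ c :=
      le_trans (div_le_self (MH_nonneg c (m + 1)) (by linarith)) h2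
    have h3 : (Nat.factorial k : ℝ) / ((m : ℝ) + 1) ^ (k + 1) ≤ (Nat.factorial k : ℝ) :=
      div_le_self (by positivity) (one_le_pow₀ (by linarith))
    have hnn : (0:ℝ) ≤ |C m| * ((Nat.factorial k : ℝ) / ((m : ℝ) + 1) ^ (k + 1)) := by
      positivity
    rw [abs_of_nonneg hnn, habsC]
    calc (Nat.factorial b : ℝ) * z ^ (m + 1) * MH c (m + 1) / ((m : ℝ) + 1)
          * ((Nat.factorial k : ℝ) / ((m : ℝ) + 1) ^ (k + 1))
        = (Nat.factorial b : ℝ) * ((z ^ (m + 1) * (MH c (m + 1) / ((m : ℝ) + 1)))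
            * ((Nat.factorial k : ℝ) / ((m : ℝ) + 1) ^ (k + 1))) := by ring
      _ ≤ (Nat.factorial b : ℝ) * ((z ^ m * ((m : ℝ) + 1) ^ c) * (Nat.factorial k : ℝ)) := by
          refine mul_le_mul_of_nonneg_left ?_ (by positivity)
          refine mul_le_mul ?_ h3 (by positivity) (by positivity)
          exact mul_le_mul h1 hdiv (div_nonneg (MH_nonneg c (m + 1)) (by positivity))
            (by positivity)
      _ = (Nat.factorial b : ℝ) * (Nat.factorial k : ℝ) * (((m : ℝ) + 1) ^ c * z ^ m) := by
          ring
  -- Step 4 : exchange sum and integral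
  have hexch := MeasureTheory.integral_tsum_of_summable_integral_norm hint hsummable
  have hIoc : (∫ t in (0:ℝ)..1, Real.log t ^ k * Real.log (1 - z * t) ^ b / t)
      = ∫ t in Set.Ioc (0:ℝ) 1, Real.log t ^ k * Real.log (1 - z * t) ^ b / t :=
    intervalIntegral.integral_of_le zero_le_one
  have hcongr : (∫ t in Set.Ioc (0:ℝ) 1, Real.log t ^ k * Real.log (1 - z * t) ^ b / t)
      = ∫ t in Set.Ioc (0:ℝ) 1, (∑' m : ℕ, F m t) :=
    MeasureTheory.setIntegral_congr_fun measurableSet_Ioc hpt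
  have hFint : ∀ m : ℕ, (∫ t in Set.Ioc (0:ℝ) 1, F m t)
      = C m * ((-1:ℝ) ^ k * (Nat.factorial k : ℝ) / ((m : ℝ) + 1) ^ (k + 1)) := by
    intro m
    simp only [hFdef]
    rw [MeasureTheory.integral_const_mul, integral_pow_log]
  rw [hIoc, hcongr, ← hexch]
  rw [tsum_congr hFint, ← tsum_mul_left]
  refine tsum_congr fun m => ?_
  simp only [hCdef]
  have hfk : (Nat.factorial k : ℝ) ≠ 0 := by positivity
  have hfb : (Nat.factorial b : ℝ) ≠ 0 := by positivity
  have hsk : (-1:ℝ) ^ k * (-1:ℝ) ^ k = 1 := by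
    rw [← pow_add]; exact Even.neg_one_pow ⟨k, by ring⟩
  have hsb : (-1:ℝ) ^ b * (-1:ℝ) ^ b = 1 := by
    rw [← pow_add]; exact Even.neg_one_pow ⟨b, by ring⟩
  have hkb : (-1:ℝ) ^ (k + b) = (-1:ℝ) ^ k * (-1:ℝ) ^ b := pow_add (-1) k b
  have helper : ∀ w fk fb s u X Y : ℝ, w ≠ 0 → fk ≠ 0 → fb ≠ 0 →
      s * u / (fk * fb) * (u * fb * X * Y / w * (s * fk / w ^ (k + 1)))
        = s * s * (u * u * (fk / fk * (fb / fb * (X * Y / w ^ (k + 1 + 1))))) := by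
    intro w fk fb s u X Y hw0 hfk' hfb'
    field_simp
    ring
  rw [hkb, helper ((m : ℝ) + 1) (Nat.factorial k : ℝ) (Nat.factorial b : ℝ)
      ((-1:ℝ) ^ k) ((-1:ℝ) ^ b) (z ^ (m + 1)) (MH c (m + 1)) (by positivity) hfk hfb,
    hsk, hsb, div_self hfk, div_self hfb, one_mul, one_mul, one_mul, one_mul]
end
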